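/- Subadditivity of conditional value-at-risk (Pflug, 2000): for any two integrable real-valued random variables X₁ and X₂ on a common probability space and every confidence level γ ∈ (0,1), CVaR_γ(X₁ + X₂) ≤ CVaR_γ(X₁) + CVaR_γ(X₂). Together with translation invariance, positive homogeneity, and monotonicity, this shows that CVaR_γ is a coherent risk measure. -/

import Mathlib

open MeasureTheory

/-- Value-at-risk of the return `X` at confidence level `β`:
`VaR_β(X) = inf {x ∈ ℝ : ℙ(x + X < 0) ≤ 1 - β}`. -/
noncomputable def VaR {Ω : Type*} [MeasurableSpace Ω] (P : Measure Ω) (X : Ω → ℝ) (β : ℝ) : ℝ :=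
  sInf {x : ℝ | (P {ω | x + X ω < 0}).toReal ≤ 1 - β}

/-- Conditional value-at-risk of the return `X` at confidence level `γ`:
`CVaR_γ(X) = (1/(1-γ)) ∫_γ^1 VaR_β(X) dβ`. -/
noncomputable def CVaR {Ω : Type*} [MeasurableSpace Ω] (P : Measure Ω) (X : Ω → ℝ) (γ : ℝ) : ℝ :=
  (1 / (1 - γ)) * ∫ β in γ..1, VaR P X β

open ProbabilityTheory Set Filter

namespace CVaRAux

/-- Generalized inverse (quantile function) of the cdf of `μ`. -/
noncomputable def qf (μ : Measure ℝ) (β : ℝ) : ℝ := sInf {x : ℝ | β ≤ cdf μ x}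

variable {μ : Measure ℝ} [IsProbabilityMeasure μ] {β β' : ℝ}

lemma qf_nonempty (hβ : β < 1) : {x : ℝ | β ≤ cdf μ x}.Nonempty := by
  obtain ⟨x, hx⟩ := ((tendsto_cdf_atTop μ).eventually (lt_mem_nhds hβ)).exists
  exact ⟨x, hx.le⟩

lemma qf_bdd (hβ : 0 < β) : BddBelow {x : ℝ | β ≤ cdf μ x} := by
  obtain ⟨x0, hx0⟩ := ((tendsto_cdf_atBot μ).eventually (gt_mem_nhds hβ)).exists
  refine ⟨x0, fun y hy => ?_⟩
  by_contra h
  push_neg at h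
  exact absurd (hy.trans (monotone_cdf μ h.le)) (not_le.mpr hx0)

lemma qf_le_iff (hβ0 : 0 < β) (hβ1 : β < 1) (x : ℝ) :
    qf μ β ≤ x ↔ β ≤ cdf μ x := by
  constructor
  · intro h
    have key : ∀ y ∈ Ioi x, β ≤ cdf μ y := by
      intro y hy
      obtain ⟨z, hz, hzy⟩ := exists_lt_of_csInf_lt (qf_nonempty hβ1) (lt_of_le_of_lt h hy)
      exact le_trans hz (monotone_cdf μ hzy.le)
    have hcont : Tendsto (cdf μ) (nhdsWithin x (Ioi x)) (nhds (cdf μ x)) :=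
      ((cdf μ).right_continuous x).mono_left (nhdsWithin_mono x Ioi_subset_Ici_self)
    exact ge_of_tendsto hcont (eventually_nhdsWithin_of_forall key)
  · intro h
    exact csInf_le (qf_bdd hβ0) h

lemma qf_mono (hβ0 : 0 < β) (hβ'1 : β' < 1) (h : β ≤ β') : qf μ β ≤ qf μ β' :=
  csInf_le_csInf (qf_bdd hβ0) (qf_nonempty hβ'1) (fun _ hx => le_trans h hx)

lemma qf_aemeas : AEMeasurable (qf μ) (volume.restrict (Ioo (0:ℝ) 1)) :=
  aemeasurable_restrict_of_monotoneOn measurableSet_Ioo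
    (fun _ ha _ hb hab => qf_mono ha.1 hb.2 hab)

lemma qf_map : Measure.map (qf μ) (volume.restrict (Ioo (0:ℝ) 1)) = μ := by
  haveI hprob : IsProbabilityMeasure (volume.restrict (Ioo (0:ℝ) 1)) :=
    ⟨by simp [Real.volume_Ioo]⟩
  haveI : IsProbabilityMeasure (Measure.map (qf μ) (volume.restrict (Ioo (0:ℝ) 1))) :=
    Measure.isProbabilityMeasure_map qf_aemeas
  refine Measure.ext_of_Iic _ _ (fun x => ?_)
  rw [Measure.map_apply_of_aemeasurable qf_aemeas measurableSet_Iic,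
      Measure.restrict_apply' measurableSet_Ioo, ← ofReal_cdf μ x]
  have hset : qf μ ⁻¹' Iic x ∩ Ioo 0 1 = Iic (cdf μ x) ∩ Ioo 0 1 := by
    ext β
    simp only [mem_inter_iff, mem_preimage, mem_Iic, mem_Ioo, and_congr_left_iff]
    intro hβ
    exact qf_le_iff hβ.1 hβ.2 x
  rw [hset]
  rcases eq_or_lt_of_le (cdf_le_one μ x) with h1 | h1
  · have h2 : Iic (cdf μ x) ∩ Ioo (0:ℝ) 1 = Ioo 0 1 :=
      inter_eq_self_of_subset_right (fun β hβ => le_of_lt (lt_of_lt_of_le hβ.2 h1.ge))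
    rw [h2, Real.volume_Ioo, ← h1]
    norm_num
  · have h2 : Iic (cdf μ x) ∩ Ioo (0:ℝ) 1 = Ioc 0 (cdf μ x) := by
      ext β
      simp only [mem_inter_iff, mem_Iic, mem_Ioo, mem_Ioc]
      constructor
      · rintro ⟨h, h0, _⟩; exact ⟨h0, h⟩
      · rintro ⟨h0, h⟩; exact ⟨h, h0, lt_of_le_of_lt h h1⟩
    rw [h2, Real.volume_Ioc, sub_zero]

end CVaRAux

namespace CVaRAux

set_option linter.unusedSectionVars false

section Integrals

variable {μ : Measure ℝ} [IsProbabilityMeasure μ]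

lemma integral_qf_eq (f : ℝ → ℝ) (hf : Measurable f) :
    ∫ x, f x ∂μ = ∫ β in Ioo (0:ℝ) 1, f (qf μ β) := by
  conv_lhs => rw [← qf_map (μ := μ)]
  exact integral_map qf_aemeas hf.aestronglyMeasurable

lemma integrableOn_qf (hμ : Integrable id μ) :
    IntegrableOn (qf μ) (Ioo (0:ℝ) 1) volume := by
  have h : Integrable id (Measure.map (qf μ) (volume.restrict (Ioo (0:ℝ) 1))) := by
    rwa [qf_map]
  exact (integrable_map_measure aestronglyMeasurable_id qf_aemeas).mp h

end Integrals

section Omega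

variable {Ω : Type*} [MeasurableSpace Ω] {P : Measure Ω} [IsProbabilityMeasure P]
  {L X Y Y₁ Y₂ : Ω → ℝ}

lemma integral_posPart_eq (hL : Measurable L) (t : ℝ) :
    ∫ ω, max (L ω - t) 0 ∂P = ∫ β in Ioo (0:ℝ) 1, max (qf (P.map L) β - t) 0 := by
  haveI := Measure.isProbabilityMeasure_map (μ := P) hL.aemeasurable
  have hf : Measurable (fun x : ℝ => max (x - t) 0) :=
    (measurable_id.sub measurable_const).max measurable_const
  have h1 : ∫ ω, max (L ω - t) 0 ∂P = ∫ x, max (x - t) 0 ∂(P.map L) :=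
    (integral_map hL.aemeasurable hf.aestronglyMeasurable).symm
  rw [h1, integral_qf_eq _ hf]

lemma integrable_id_map (hL : Measurable L) (hLi : Integrable L P) :
    Integrable id (P.map L) :=
  (integrable_map_measure aestronglyMeasurable_id hL.aemeasurable).mpr hLi

lemma lemA (hL : Measurable L) (hLi : Integrable L P) {γ : ℝ} (hγ : γ ∈ Ioo (0:ℝ) 1) (t : ℝ) :
    ∫ β in Ioo γ 1, qf (P.map L) β ≤ (1-γ)*t + ∫ ω, max (L ω - t) 0 ∂P := by
  haveI := Measure.isProbabilityMeasure_map (μ := P) hL.aemeasurable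
  set ν := P.map L with hν
  have hInt : IntegrableOn (qf ν) (Ioo (0:ℝ) 1) volume :=
    integrableOn_qf (integrable_id_map hL hLi)
  have hsub : Ioo γ 1 ⊆ Ioo (0:ℝ) 1 := Ioo_subset_Ioo hγ.1.le le_rfl
  have hIγ : IntegrableOn (qf ν) (Ioo γ 1) volume := hInt.mono_set hsub
  have hconst : IntegrableOn (fun _ : ℝ => t) (Ioo γ 1) volume :=
    integrableOn_const measure_Ioo_lt_top.ne
  have hconst' : IntegrableOn (fun _ : ℝ => t) (Ioo (0:ℝ) 1) volume :=
    integrableOn_const measure_Ioo_lt_top.ne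
  have hvol : (volume (Ioo γ 1)).toReal = 1 - γ := by
    rw [Real.volume_Ioo]; exact ENNReal.toReal_ofReal (by linarith [hγ.2])
  have e1 : ∫ β in Ioo γ 1, (qf ν β - t) = (∫ β in Ioo γ 1, qf ν β) - (1-γ)*t := by
    rw [integral_sub hIγ hconst, setIntegral_const, measureReal_def, hvol, smul_eq_mul]
  have e2 : ∫ β in Ioo γ 1, (qf ν β - t) ≤ ∫ β in Ioo γ 1, max (qf ν β - t) 0 :=
    integral_mono (hIγ.sub hconst) ((hIγ.sub hconst).pos_part) (fun β => le_max_left _ _)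
  have e3 : ∫ β in Ioo γ 1, max (qf ν β - t) 0 ≤ ∫ β in Ioo (0:ℝ) 1, max (qf ν β - t) 0 :=
    setIntegral_mono_set ((hInt.sub hconst').pos_part)
      (Filter.Eventually.of_forall fun β => le_max_right _ _)
      (HasSubset.Subset.eventuallyLE hsub)
  have e4 := integral_posPart_eq (P := P) hL t
  rw [e4]
  linarith

lemma lemB (hL : Measurable L) (hLi : Integrable L P) {γ : ℝ} (hγ : γ ∈ Ioo (0:ℝ) 1) :
    (1-γ) * qf (P.map L) γ + ∫ ω, max (L ω - qf (P.map L) γ) 0 ∂P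
      = ∫ β in Ioo γ 1, qf (P.map L) β := by
  haveI := Measure.isProbabilityMeasure_map (μ := P) hL.aemeasurable
  set ν := P.map L with hν
  set a := qf ν γ with ha
  have hInt : IntegrableOn (qf ν) (Ioo (0:ℝ) 1) volume :=
    integrableOn_qf (integrable_id_map hL hLi)
  have hsub : Ioo γ 1 ⊆ Ioo (0:ℝ) 1 := Ioo_subset_Ioo hγ.1.le le_rfl
  have hsub' : Ioc (0:ℝ) γ ⊆ Ioo (0:ℝ) 1 :=
    fun β hβ => ⟨hβ.1, lt_of_le_of_lt hβ.2 hγ.2⟩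
  have hIγ : IntegrableOn (qf ν) (Ioo γ 1) volume := hInt.mono_set hsub
  have hconst : IntegrableOn (fun _ : ℝ => a) (Ioo γ 1) volume :=
    integrableOn_const measure_Ioo_lt_top.ne
  have hconst' : IntegrableOn (fun _ : ℝ => a) (Ioo (0:ℝ) 1) volume :=
    integrableOn_const measure_Ioo_lt_top.ne
  have hposInt : IntegrableOn (fun β => max (qf ν β - a) 0) (Ioo (0:ℝ) 1) volume :=
    (hInt.sub hconst').pos_part
  have hvol : (volume (Ioo γ 1)).toReal = 1 - γ := by
    rw [Real.volume_Ioo]; exact ENNReal.toReal_ofReal (by linarith [hγ.2])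
  have hdisj : Disjoint (Ioc (0:ℝ) γ) (Ioo γ 1) := by
    rw [Set.disjoint_left]
    rintro β ⟨_, h1⟩ ⟨h2, _⟩
    exact absurd h1 (not_le.mpr h2)
  have hsplit : Ioc (0:ℝ) γ ∪ Ioo γ 1 = Ioo (0:ℝ) 1 := Ioc_union_Ioo_eq_Ioo hγ.1.le hγ.2
  have hunion : ∫ β in Ioo (0:ℝ) 1, max (qf ν β - a) 0
      = (∫ β in Ioc (0:ℝ) γ, max (qf ν β - a) 0) + ∫ β in Ioo γ 1, max (qf ν β - a) 0 := by
    rw [← hsplit]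
    exact setIntegral_union hdisj measurableSet_Ioo
      (hposInt.mono_set hsub') (hposInt.mono_set hsub)
  have hzero : ∫ β in Ioc (0:ℝ) γ, max (qf ν β - a) 0 = 0 := by
    have heq : EqOn (fun β => max (qf ν β - a) 0) (fun _ => (0:ℝ)) (Ioc (0:ℝ) γ) :=
      fun β hβ => max_eq_right (sub_nonpos.mpr (qf_mono hβ.1 hγ.2 hβ.2))
    rw [setIntegral_congr_fun measurableSet_Ioc heq, integral_zero]
  have heq2 : ∫ β in Ioo γ 1, max (qf ν β - a) 0 = ∫ β in Ioo γ 1, (qf ν β - a) := by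
    have heq : EqOn (fun β => max (qf ν β - a) 0) (fun β => qf ν β - a) (Ioo γ 1) :=
      fun β hβ => max_eq_left (sub_nonneg.mpr (qf_mono hγ.1 hβ.2 hβ.1.le))
    exact setIntegral_congr_fun measurableSet_Ioo heq
  have e1 : ∫ β in Ioo γ 1, (qf ν β - a) = (∫ β in Ioo γ 1, qf ν β) - (1-γ)*a := by
    rw [integral_sub hIγ hconst, setIntegral_const, measureReal_def, hvol, smul_eq_mul]
  have e4 := integral_posPart_eq (P := P) hL a
  rw [e4, hunion, hzero, heq2, e1]
  ring

end Omega

end CVaRAux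

namespace CVaRAux

open ProbabilityTheory Set Filter

set_option linter.unusedSectionVars false

section VaRSection

variable {Ω : Type*} [MeasurableSpace Ω] {P : Measure Ω} [IsProbabilityMeasure P]
  {X Y Y₁ Y₂ : Ω → ℝ}

lemma VaR_eq (hX : Measurable X) (β : ℝ) :
    VaR P X β = qf (P.map (fun ω => -X ω)) β := by
  unfold VaR qf
  congr 1
  ext x
  simp only [mem_setOf_eq]
  have hset : {ω | x + X ω < 0} = (fun ω => -X ω) ⁻¹' Ioi x := by
    ext ω
    simp only [mem_setOf_eq, mem_preimage, mem_Ioi]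
    constructor <;> intro h <;> linarith
  have hIoi : (fun ω : Ω => -X ω) ⁻¹' Ioi x = ((fun ω : Ω => -X ω) ⁻¹' Iic x)ᶜ := by
    ext ω; simp [not_le]
  rw [hset, hIoi, measure_compl (show MeasurableSet ((fun ω => -X ω) ⁻¹' Iic x) from hX.neg measurableSet_Iic) (measure_ne_top _ _), measure_univ,
    ← Measure.map_apply (f := fun ω => -X ω) hX.neg measurableSet_Iic,
    ENNReal.toReal_sub_of_le prob_le_one ENNReal.one_ne_top, ENNReal.toReal_one]
  haveI := Measure.isProbabilityMeasure_map (μ := P) hX.neg.aemeasurable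
  rw [← measureReal_def, ← cdf_eq_real]
  constructor <;> intro h <;> linarith

lemma CVaR_eq (hX : Measurable X) {γ : ℝ} (hγle : γ ≤ 1) :
    CVaR P X γ = (1/(1-γ)) * ∫ β in Ioo γ 1, qf (P.map (fun ω => -X ω)) β := by
  unfold CVaR
  rw [intervalIntegral.integral_of_le hγle, integral_Ioc_eq_integral_Ioo]
  congr 1
  exact setIntegral_congr_fun measurableSet_Ioo (fun β _ => VaR_eq hX β)

lemma VaR_congr (h : X =ᵐ[P] Y) : VaR P X = VaR P Y := by
  funext β
  unfold VaR
  congr 1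
  ext x
  simp only [mem_setOf_eq]
  have hm : P {ω | x + X ω < 0} = P {ω | x + Y ω < 0} := by
    refine measure_congr (eventuallyEq_set.mpr (h.mono fun ω hω => ?_))
    simp only [mem_setOf_eq, hω]
  rw [hm]

lemma CVaR_congr (h : X =ᵐ[P] Y) (γ : ℝ) : CVaR P X γ = CVaR P Y γ := by
  unfold CVaR
  rw [VaR_congr h]

lemma core (hY₁ : Measurable Y₁) (hY₂ : Measurable Y₂)
    (hi₁ : Integrable Y₁ P) (hi₂ : Integrable Y₂ P) {γ : ℝ} (hγ : γ ∈ Ioo (0:ℝ) 1) :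
    CVaR P (fun ω => Y₁ ω + Y₂ ω) γ ≤ CVaR P Y₁ γ + CVaR P Y₂ γ := by
  set L₁ : Ω → ℝ := fun ω => -Y₁ ω with hL₁def
  set L₂ : Ω → ℝ := fun ω => -Y₂ ω with hL₂def
  set L₁₂ : Ω → ℝ := fun ω => -(Y₁ ω + Y₂ ω) with hL₁₂def
  have hL₁ : Measurable L₁ := hY₁.neg
  have hL₂ : Measurable L₂ := hY₂.neg
  have hL₁₂ : Measurable L₁₂ := (hY₁.add hY₂).neg
  have hLi₁ : Integrable L₁ P := hi₁.neg
  have hLi₂ : Integrable L₂ P := hi₂.neg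
  have hLi₁₂ : Integrable L₁₂ P := (hi₁.add hi₂).neg
  set a := qf (P.map L₁) γ with ha
  set b := qf (P.map L₂) γ with hb
  have hmax : ∀ ω, max (L₁₂ ω - (a+b)) 0 ≤ max (L₁ ω - a) 0 + max (L₂ ω - b) 0 := by
    intro ω
    have h : L₁₂ ω - (a+b) = (L₁ ω - a) + (L₂ ω - b) := by
      simp only [hL₁₂def, hL₁def, hL₂def]; ring
    rw [h]
    exact max_le (add_le_add (le_max_left _ _) (le_max_left _ _))
      (add_nonneg (le_max_right _ _) (le_max_right _ _))
  have hint₁ : Integrable (fun ω => max (L₁ ω - a) 0) P :=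
    (hLi₁.sub (integrable_const a)).pos_part
  have hint₂ : Integrable (fun ω => max (L₂ ω - b) 0) P :=
    (hLi₂.sub (integrable_const b)).pos_part
  have hint₁₂ : Integrable (fun ω => max (L₁₂ ω - (a+b)) 0) P :=
    (hLi₁₂.sub (integrable_const (a+b))).pos_part
  have hImono : ∫ ω, max (L₁₂ ω - (a+b)) 0 ∂P
      ≤ (∫ ω, max (L₁ ω - a) 0 ∂P) + ∫ ω, max (L₂ ω - b) 0 ∂P := by
    calc ∫ ω, max (L₁₂ ω - (a+b)) 0 ∂P
        ≤ ∫ ω, (max (L₁ ω - a) 0 + max (L₂ ω - b) 0) ∂P :=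
          integral_mono hint₁₂ (hint₁.add hint₂) hmax
      _ = _ := integral_add hint₁ hint₂
  have hA := lemA hL₁₂ hLi₁₂ hγ (a+b)
  have hB₁ := lemB hL₁ hLi₁ hγ
  have hB₂ := lemB hL₂ hLi₂ hγ
  have key : ∫ β in Ioo γ 1, qf (P.map L₁₂) β
      ≤ (∫ β in Ioo γ 1, qf (P.map L₁) β) + ∫ β in Ioo γ 1, qf (P.map L₂) β := by
    rw [← hB₁, ← hB₂]
    calc ∫ β in Ioo γ 1, qf (P.map L₁₂) β
        ≤ (1-γ)*(a+b) + ∫ ω, max (L₁₂ ω - (a+b)) 0 ∂P := hA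
      _ ≤ (1-γ)*(a+b) + ((∫ ω, max (L₁ ω - a) 0 ∂P) + ∫ ω, max (L₂ ω - b) 0 ∂P) := by
          linarith
      _ = ((1-γ)*a + ∫ ω, max (L₁ ω - a) 0 ∂P) + ((1-γ)*b + ∫ ω, max (L₂ ω - b) 0 ∂P) := by
          ring
  have e12 : CVaR P (fun ω => Y₁ ω + Y₂ ω) γ = (1/(1-γ)) * ∫ β in Ioo γ 1, qf (P.map L₁₂) β :=
    CVaR_eq (hY₁.add hY₂) hγ.2.le
  have e1 : CVaR P Y₁ γ = (1/(1-γ)) * ∫ β in Ioo γ 1, qf (P.map L₁) β :=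
    CVaR_eq hY₁ hγ.2.le
  have e2 : CVaR P Y₂ γ = (1/(1-γ)) * ∫ β in Ioo γ 1, qf (P.map L₂) β :=
    CVaR_eq hY₂ hγ.2.le
  rw [e12, e1, e2, ← mul_add]
  have hpos : (0:ℝ) ≤ 1/(1-γ) := by
    have : (0:ℝ) < 1 - γ := by linarith [hγ.2]
    positivity
  exact mul_le_mul_of_nonneg_left key hpos

end VaRSection

end CVaRAux

/-- Subadditivity of conditional value-at-risk (Pflug, 2000):
`CVaR_γ(X₁ + X₂) ≤ CVaR_γ(X₁) + CVaR_γ(X₂)`. -/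
theorem CVaR_subadditive {Ω : Type*} [MeasurableSpace Ω]
    (P : Measure Ω) [IsProbabilityMeasure P] (X₁ X₂ : Ω → ℝ)
    (hX₁ : Integrable X₁ P) (hX₂ : Integrable X₂ P)
    (γ : ℝ) (hγ : γ ∈ Set.Ioo (0 : ℝ) 1) :
    CVaR P (fun ω => X₁ ω + X₂ ω) γ ≤ CVaR P X₁ γ + CVaR P X₂ γ := by
  have h₁ := hX₁.1
  have h₂ := hX₂.1
  set Y₁ := h₁.mk X₁ with hY₁def
  set Y₂ := h₂.mk X₂ with hY₂def
  have hm₁ : Measurable Y₁ := h₁.stronglyMeasurable_mk.measurable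
  have hm₂ : Measurable Y₂ := h₂.stronglyMeasurable_mk.measurable
  have hae₁ : X₁ =ᵐ[P] Y₁ := h₁.ae_eq_mk
  have hae₂ : X₂ =ᵐ[P] Y₂ := h₂.ae_eq_mk
  have hi₁ : Integrable Y₁ P := hX₁.congr hae₁
  have hi₂ : Integrable Y₂ P := hX₂.congr hae₂
  have hsum : (fun ω => X₁ ω + X₂ ω) =ᵐ[P] (fun ω => Y₁ ω + Y₂ ω) := hae₁.add hae₂
  rw [CVaRAux.CVaR_congr hsum γ, CVaRAux.CVaR_congr hae₁ γ, CVaRAux.CVaR_congr hae₂ γ]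
  exact CVaRAux.core hm₁ hm₂ hi₁ hi₂ hγ
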